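/- Let K be a number field. For every real x ≥ 0, one has 0 ≤ π⁰_K(x) − π¹_K(x) ≤ (n_K/2)·√x, where π⁰_K(x) is the number of unramified nonzero prime ideals 𝔭 of O_K with N𝔭 ≤ x, and π¹_K(x) is the number of unramified nonzero prime ideals 𝔭 of O_K with N𝔭 ≤ x whose residue (inertia) degree over the rational prime below 𝔭 equals 1. -/

import Mathlib

open NumberField

/-- A nonzero prime ideal of `𝓞 K` is unramified if its ramification index over the
rational prime below it equals 1. -/
def IsUnramifiedPrimeIdeal (K : Type) [Field K] [NumberField K] (q : Ideal (𝓞 K)) : Prop :=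
  q.IsPrime ∧ q ≠ ⊥ ∧
    Ideal.ramificationIdx' (Ideal.comap (algebraMap ℤ (𝓞 K)) q) q = 1

/-- `π⁰_K(x)`: the number of unramified nonzero prime ideals of `𝓞 K` of norm at most `x`. -/
noncomputable def piZeroK (K : Type) [Field K] [NumberField K] (x : ℝ) : ℕ :=
  {q : Ideal (𝓞 K) | IsUnramifiedPrimeIdeal K q ∧ (Ideal.absNorm q : ℝ) ≤ x}.ncard

/-- `π¹_K(x)`: the number of unramified nonzero prime ideals of `𝓞 K` of norm at most `x`
whose residue (inertia) degree over the rational prime below equals 1. -/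
noncomputable def piOneK (K : Type) [Field K] [NumberField K] (x : ℝ) : ℕ :=
  {q : Ideal (𝓞 K) | IsUnramifiedPrimeIdeal K q ∧ (Ideal.absNorm q : ℝ) ≤ x ∧
    Ideal.inertiaDeg' (Ideal.comap (algebraMap ℤ (𝓞 K)) q) q = 1}.ncard

lemma aux_norm_int_self (g : ℤ) : Algebra.norm ℤ g = g := by
  rw [show (g : ℤ) = algebraMap ℤ ℤ g from rfl,
    Algebra.norm_algebraMap_of_basis (Module.Basis.singleton Unit ℤ)]
  simp

lemma aux_int_ideal_eq (P : Ideal ℤ) : P = Ideal.span {(Ideal.absNorm P : ℤ)} := by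
  obtain ⟨g, hg⟩ := (IsPrincipalIdealRing.principal P).principal
  rw [hg, Ideal.submodule_span_eq, Ideal.absNorm_span_singleton, aux_norm_int_self,
    Int.span_natAbs]

lemma aux_nat_card_eq_pow_finrank (k V : Type*) [Field k] [AddCommGroup V] [Module k V]
    [Finite k] [Finite V] : Nat.card V = Nat.card k ^ Module.finrank k V := by
  haveI : Fintype V := Fintype.ofFinite _
  haveI : Fintype k := Fintype.ofFinite _
  rw [Nat.card_eq_fintype_card, Nat.card_eq_fintype_card]
  exact Module.card_eq_pow_finrank

lemma aux_comap_ne_bot (K : Type) [Field K] [NumberField K] (q : Ideal (𝓞 K)) (hq0 : q ≠ ⊥) :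
    Ideal.comap (algebraMap ℤ (𝓞 K)) q ≠ ⊥ :=
  Ideal.IsIntegralClosure.comap_ne_bot (R := ℤ) (A := 𝓞 K) hq0

set_option synthInstance.maxHeartbeats 1000000 in
lemma aux_absNorm_prime_eq (K : Type) [Field K] [NumberField K] (q : Ideal (𝓞 K))
    [hq : q.IsPrime] (hq0 : q ≠ ⊥) :
    Ideal.absNorm q = Ideal.absNorm (Ideal.comap (algebraMap ℤ (𝓞 K)) q) ^
      Ideal.inertiaDeg' (Ideal.comap (algebraMap ℤ (𝓞 K)) q) q := by
  set P := Ideal.comap (algebraMap ℤ (𝓞 K)) q with hP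
  haveI : P.IsPrime := Ideal.IsPrime.comap _
  have hP0 : P ≠ ⊥ := aux_comap_ne_bot K q hq0
  haveI : P.IsMaximal := Ideal.IsPrime.isMaximal ‹P.IsPrime› hP0
  haveI : q.LiesOver P := ⟨rfl⟩
  rw [Ideal.inertiaDeg'_algebraMap]
  have hfin1 : Finite ((𝓞 K) ⧸ q) := by
    have h1 : Ideal.absNorm q ≠ 0 := by rwa [Ne, Ideal.absNorm_eq_zero_iff]
    rw [Ideal.absNorm_apply, Submodule.cardQuot_apply] at h1
    exact (Nat.card_ne_zero.mp h1).2
  have hfin2 : Finite (ℤ ⧸ P) := by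
    have h1 : Ideal.absNorm P ≠ 0 := by rwa [Ne, Ideal.absNorm_eq_zero_iff]
    rw [Ideal.absNorm_apply, Submodule.cardQuot_apply] at h1
    exact (Nat.card_ne_zero.mp h1).2
  rw [Ideal.absNorm_apply, Submodule.cardQuot_apply, Ideal.absNorm_apply,
    Submodule.cardQuot_apply]
  letI := Ideal.Quotient.field P
  exact aux_nat_card_eq_pow_finrank (ℤ ⧸ P) ((𝓞 K) ⧸ q)

set_option synthInstance.maxHeartbeats 1000000 in
set_option maxHeartbeats 1000000 in
/-- for a number field `K` and every real `x ≥ 0`,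
`0 ≤ π⁰_K(x) − π¹_K(x) ≤ (n_K/2)·√x`. -/
theorem piZeroK_sub_piOneK_bound (K : Type) [Field K] [NumberField K]
    (x : ℝ) (hx : 0 ≤ x) :
    piOneK K x ≤ piZeroK K x ∧
      (piZeroK K x : ℝ) - piOneK K x ≤ (Module.finrank ℚ K : ℝ) / 2 * Real.sqrt x := by
  classical
  set alg := algebraMap ℤ (𝓞 K) with halg
  set A := {q : Ideal (𝓞 K) | IsUnramifiedPrimeIdeal K q ∧ (Ideal.absNorm q : ℝ) ≤ x} with hAdef
  set B := {q : Ideal (𝓞 K) | IsUnramifiedPrimeIdeal K q ∧ (Ideal.absNorm q : ℝ) ≤ x ∧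
    Ideal.inertiaDeg' (Ideal.comap alg q) q = 1} with hBdef
  have hAfin : A.Finite := by
    refine (Ideal.finite_setOf_absNorm_le (S := 𝓞 K) ⌊x⌋₊).subset ?_
    intro q hq
    exact Nat.le_floor hq.2
  have hBA : B ⊆ A := fun q hq => ⟨hq.1, hq.2.1⟩
  have h1 : piOneK K x ≤ piZeroK K x := Set.ncard_le_ncard hBA hAfin
  refine ⟨h1, ?_⟩
  have hdiff : (piZeroK K x : ℝ) - piOneK K x = ((A \ B).ncard : ℝ) :=
    (Set.cast_ncard_sdiff hBA hAfin).symm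
  rw [hdiff]
  -- now bound the cardinality of A \ B
  set S := A \ B with hSdef
  have hSfin : S.Finite := hAfin.diff (t := B)
  set T := hSfin.toFinset with hTdef
  have hcard : S.ncard = T.card := Set.ncard_eq_toFinset_card S hSfin
  rw [hcard]
  set n := Module.finrank ℚ K with hn
  set k := ⌊Real.sqrt x⌋₊ with hk
  -- basic facts about elements of T
  have hmemT : ∀ q ∈ T, IsUnramifiedPrimeIdeal K q ∧ (Ideal.absNorm q : ℝ) ≤ x ∧
      Ideal.inertiaDeg' (Ideal.comap alg q) q ≠ 1 := by
    intro q hq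
    rw [hTdef, Set.Finite.mem_toFinset] at hq
    obtain ⟨hqA, hqB⟩ := hq
    refine ⟨hqA.1, hqA.2, fun hf => hqB ⟨hqA.1, hqA.2, hf⟩⟩
  -- facts for each q in T
  have hfacts : ∀ q ∈ T, 2 ≤ Ideal.absNorm (Ideal.comap alg q) ∧
      2 ≤ Ideal.inertiaDeg' (Ideal.comap alg q) q := by
    intro q hq
    obtain ⟨⟨hqprime, hq0, _⟩, _, hfne⟩ := hmemT q hq
    haveI := hqprime
    set P := Ideal.comap alg q with hPdef
    haveI : P.IsPrime := Ideal.IsPrime.comap _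
    have hP0 : P ≠ ⊥ := aux_comap_ne_bot K q hq0
    haveI : P.IsMaximal := Ideal.IsPrime.isMaximal ‹P.IsPrime› hP0
    haveI : q.LiesOver P := ⟨rfl⟩
    have hm2 : 2 ≤ Ideal.absNorm P := by
      rcases Nat.lt_or_ge (Ideal.absNorm P) 2 with h | h
      · interval_cases h' : Ideal.absNorm P
        · exact absurd (Ideal.absNorm_eq_zero_iff.mp h') hP0
        · exact absurd (Ideal.absNorm_eq_one_iff.mp h') ‹P.IsPrime›.ne_top
      · exact h
    have hf1 : 0 < Ideal.inertiaDeg' P q := Ideal.inertiaDeg'_pos P q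
    have hf2 : 2 ≤ Ideal.inertiaDeg' P q := by omega
    exact ⟨hm2, hf2⟩
  -- norm bound: the rational prime below is at most √x
  have hmem : ∀ q ∈ T, Ideal.absNorm (Ideal.comap alg q) ∈ Finset.Icc 2 k := by
    intro q hq
    obtain ⟨⟨hqprime, hq0, _⟩, hqx, _⟩ := hmemT q hq
    obtain ⟨hm2, hf2⟩ := hfacts q hq
    haveI := hqprime
    set m := Ideal.absNorm (Ideal.comap alg q) with hm
    have heq := aux_absNorm_prime_eq K q hq0
    have hpow : m ^ 2 ≤ Ideal.absNorm q := by
      rw [heq]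
      exact Nat.pow_le_pow_right (by omega) hf2
    have hreal : ((m : ℝ)) ^ 2 ≤ x := by
      calc ((m : ℝ)) ^ 2 = ((m ^ 2 : ℕ) : ℝ) := by push_cast; ring
      _ ≤ (Ideal.absNorm q : ℝ) := by exact_mod_cast hpow
      _ ≤ x := hqx
    have hsqrt : (m : ℝ) ≤ Real.sqrt x := (Real.le_sqrt (by positivity) hx).mpr hreal
    exact Finset.mem_Icc.mpr ⟨hm2, Nat.le_floor hsqrt⟩
  -- fiberwise counting
  have hfiber : ∀ m : ℕ, 2 * (T.filter (fun q => Ideal.absNorm (Ideal.comap alg q) = m)).card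
      ≤ n := by
    intro m
    set F := T.filter (fun q => Ideal.absNorm (Ideal.comap alg q) = m) with hF
    rcases F.eq_empty_or_nonempty with hFe | ⟨q₀, hq₀⟩
    · simp [hFe]
    · have hq₀T : q₀ ∈ T := (Finset.mem_filter.mp hq₀).1
      have hq₀m : Ideal.absNorm (Ideal.comap alg q₀) = m := (Finset.mem_filter.mp hq₀).2
      obtain ⟨⟨hq₀prime, hq₀0, _⟩, _, _⟩ := hmemT q₀ hq₀T
      set P := Ideal.comap alg q₀ with hPdef
      haveI : q₀.IsPrime := hq₀prime
      haveI : P.IsPrime := Ideal.IsPrime.comap _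
      have hP0 : P ≠ ⊥ := aux_comap_ne_bot K q₀ hq₀0
      haveI : P.IsMaximal := Ideal.IsPrime.isMaximal ‹P.IsPrime› hP0
      -- all elements of F lie over P
      have hcomap : ∀ q ∈ F, Ideal.comap alg q = P := by
        intro q hq
        have hqm : Ideal.absNorm (Ideal.comap alg q) = m := (Finset.mem_filter.mp hq).2
        rw [aux_int_ideal_eq (Ideal.comap alg q), aux_int_ideal_eq P, hqm, hq₀m]
      have hmapbot : Ideal.map alg P ≠ ⊥ := by
        rw [Ne, Ideal.map_eq_bot_iff_of_injective]
        · exact hP0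
        · rw [halg, algebraMap_int_eq]
          exact Int.cast_injective
      have hsub : F ⊆ (UniqueFactorizationMonoid.factors (Ideal.map alg P)).toFinset := by
        intro q hq
        have hqT : q ∈ T := (Finset.mem_filter.mp hq).1
        obtain ⟨⟨hqprime, hq0, _⟩, _, _⟩ := hmemT q hqT
        rw [Multiset.mem_toFinset, UniqueFactorizationMonoid.factors_eq_normalizedFactors,
          Ideal.mem_normalizedFactors_iff hmapbot]
        refine ⟨hqprime, ?_⟩
        rw [Ideal.map_le_iff_le_comap, hcomap q hq]
      have hterm : ∀ q ∈ F, 2 ≤ Ideal.ramificationIdx' P q * Ideal.inertiaDeg' P q := by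
        intro q hq
        have hqT : q ∈ T := (Finset.mem_filter.mp hq).1
        obtain ⟨⟨hqprime, hq0, hqe⟩, _, _⟩ := hmemT q hqT
        obtain ⟨_, hf2⟩ := hfacts q hqT
        rw [← hcomap q hq] at *
        rw [hqe, one_mul]
        exact hf2
      calc 2 * F.card = ∑ _q ∈ F, 2 := by rw [Finset.sum_const, smul_eq_mul, mul_comm]
        _ ≤ ∑ q ∈ F, Ideal.ramificationIdx' P q * Ideal.inertiaDeg' P q :=
          Finset.sum_le_sum hterm
        _ ≤ ∑ q ∈ (UniqueFactorizationMonoid.factors (Ideal.map alg P)).toFinset,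
            Ideal.ramificationIdx' P q * Ideal.inertiaDeg' P q :=
          Finset.sum_le_sum_of_subset hsub
        _ = n := Ideal.sum_ramification_inertia (S := 𝓞 K) (p := P) (K := ℚ) (L := K) hP0
  -- put it together
  have hsplit : T.card = ∑ m ∈ Finset.Icc 2 k,
      (T.filter (fun q => Ideal.absNorm (Ideal.comap alg q) = m)).card :=
    Finset.card_eq_sum_card_fiberwise hmem
  have hreal : (T.card : ℝ) ≤ (Finset.Icc 2 k).card * ((n : ℝ) / 2) := by
    rw [hsplit]
    push_cast
    calc (∑ m ∈ Finset.Icc 2 k, ((T.filter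
          (fun q => Ideal.absNorm (Ideal.comap alg q) = m)).card : ℝ))
        ≤ ∑ _m ∈ Finset.Icc 2 k, (n : ℝ) / 2 := by
          refine Finset.sum_le_sum fun m _ => ?_
          have := hfiber m
          have h2 : (2 : ℝ) * ((T.filter (fun q => Ideal.absNorm (Ideal.comap alg q) = m)).card)
              ≤ (n : ℝ) := by exact_mod_cast this
          linarith
      _ = (Finset.Icc 2 k).card * ((n : ℝ) / 2) := by rw [Finset.sum_const, nsmul_eq_mul]
  refine hreal.trans ?_
  have hkcard : ((Finset.Icc 2 k).card : ℝ) ≤ Real.sqrt x := by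
    rw [Nat.card_Icc]
    have h1 : ((k + 1 - 2 : ℕ) : ℝ) ≤ (k : ℝ) := by
      have : k + 1 - 2 ≤ k := by omega
      exact_mod_cast this
    exact h1.trans (Nat.floor_le (Real.sqrt_nonneg x))
  have hn0 : (0 : ℝ) ≤ (n : ℝ) / 2 := by positivity
  calc ((Finset.Icc 2 k).card : ℝ) * ((n : ℝ) / 2) ≤ Real.sqrt x * ((n : ℝ) / 2) := by
        exact mul_le_mul_of_nonneg_right hkcard hn0
    _ = (n : ℝ) / 2 * Real.sqrt x := by ring
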